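/- Let β ≥ 1 and R_c ∈ (0,1]. For the single-precoder strategy over the (β+1)-slot SSAF channel with spreading s, the Matryoshka parameters are D = (β+1, β, ..., s) with |D| = β + 2 - s blocks and L = (sN/(β+1), N/(β+1), ..., N/(β+1)). Applying the Singleton-type index i from Proposition 1: if R_c ≤ s/(β+1) then i = 1 and the bound equals β+1; if R_c > s/(β+1) and R_c(β+1) ∉ ℤ, then s + i - 1 = ⌈R_c(β+1)⌉ and the bound β + 2 - i equals s + ⌊(1-R_c)(β+1)⌋. -/

import Mathlib

/-- Single-precoder strategy over the `(β+1)`-slot SSAF channel: with block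
lengths `L_1 = sN/(β+1)` and `L_k = N/(β+1)` for `k ≥ 2`, the Proposition-1 index
`i` satisfies: if `R_c ≤ s/(β+1)` then `i = 1` and the bound is `β+1`; if
`R_c > s/(β+1)` and `R_c(β+1) ∉ ℤ` then `s + i - 1 = ⌈R_c(β+1)⌉` and
`β + 2 - i = s + ⌊(1-R_c)(β+1)⌋`. -/
theorem delta_max2_closed_form
    (β s : ℕ) (hβ : 1 ≤ β) (hs1 : 1 ≤ s) (hs2 : s ≤ β + 1)
    (R : ℝ) (h0 : 0 < R) (h1 : R ≤ 1)
    (N : ℝ) (hN : 0 < N)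
    (L : ℕ → ℝ) (hL0 : L 0 = (s : ℝ) * N / ((β : ℝ) + 1))
    (hLk : ∀ k, 1 ≤ k → L k = N / ((β : ℝ) + 1))
    (i : ℕ) (hi1 : 1 ≤ i) (hi2 : i ≤ β + 2 - s)
    (hlow : ∑ k ∈ Finset.range (i - 1), L k < R * N)
    (hhigh : R * N ≤ ∑ k ∈ Finset.range i, L k) :
    (R ≤ (s : ℝ) / ((β : ℝ) + 1) → i = 1 ∧ (β : ℤ) + 2 - (i : ℤ) = (β : ℤ) + 1) ∧
    (((s : ℝ) / ((β : ℝ) + 1) < R ∧ (∀ z : ℤ, R * ((β : ℝ) + 1) ≠ (z : ℝ))) →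
      (s : ℤ) + (i : ℤ) - 1 = ⌈R * ((β : ℝ) + 1)⌉ ∧
      (β : ℤ) + 2 - (i : ℤ) = (s : ℤ) + ⌊(1 - R) * ((β : ℝ) + 1)⌋) := by

  have hb : (0:ℝ) < (β:ℝ) + 1 := by positivity
  set c : ℝ := N / ((β:ℝ)+1) with hc
  have hcpos : 0 < c := by positivity
  have hNc : N = ((β:ℝ)+1) * c := by rw [hc, mul_div_assoc']; exact (mul_div_cancel_left₀ N hb.ne').symm
  have hsum : ∀ n, 1 ≤ n → ∑ k ∈ Finset.range n, L k = ((s:ℝ) + (n:ℝ) - 1) * c := by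
    intro n hn
    induction n with
    | zero => omega
    | succ m ih =>
      rcases Nat.eq_zero_or_pos m with hm | hm
      · subst hm
        rw [Finset.sum_range_one, hL0, hc]
        push_cast; ring
      · rw [Finset.sum_range_succ, ih hm, hLk m hm]
        push_cast; ring
  have hhigh' : R * ((β:ℝ)+1) ≤ (s:ℝ) + (i:ℝ) - 1 := by
    rw [hsum i hi1, hNc] at hhigh
    nlinarith [hhigh, hcpos]
  constructor
  · intro hR
    have hi : i = 1 := by
      by_contra hne
      have hi2' : 2 ≤ i := by omega
      have h1le : 1 ≤ i - 1 := by omega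
      rw [hsum (i-1) h1le, hNc] at hlow
      have hcast : ((i - 1 : ℕ) : ℝ) = (i:ℝ) - 1 := by
        have := Nat.cast_sub hi1 (R := ℝ); push_cast at this ⊢; linarith
      rw [hcast] at hlow
      have hRs : R * ((β:ℝ)+1) ≤ (s:ℝ) := by
        rw [le_div_iff₀ hb] at hR; linarith
      have hi2R : (2:ℝ) ≤ (i:ℝ) := by exact_mod_cast hi2'
      nlinarith [hlow, hcpos]
    refine ⟨hi, by rw [hi]; ring⟩
  · rintro ⟨hR, hnint⟩
    have hRs : (s:ℝ) < R * ((β:ℝ)+1) := by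
      rw [div_lt_iff₀ hb] at hR; linarith
    have hi2' : 2 ≤ i := by
      by_contra hne
      have : i = 1 := by omega
      rw [this] at hhigh'
      push_cast at hhigh'
      linarith
    have h1le : 1 ≤ i - 1 := by omega
    rw [hsum (i-1) h1le, hNc] at hlow
    have hcast : ((i - 1 : ℕ) : ℝ) = (i:ℝ) - 1 := by
      have h := Nat.cast_sub hi1 (R := ℝ); push_cast at h; linarith
    rw [hcast] at hlow
    have hlow' : (s:ℝ) + (i:ℝ) - 2 < R * ((β:ℝ)+1) := by nlinarith [hlow, hcpos]
    have hceil : ((s:ℤ) + (i:ℤ) - 1 : ℤ) = ⌈R * ((β:ℝ)+1)⌉ := by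
      symm
      rw [Int.ceil_eq_iff]
      constructor
      · push_cast; linarith
      · push_cast; linarith
    refine ⟨hceil, ?_⟩
    have hfloor : ⌊(1 - R) * ((β:ℝ)+1)⌋ = (β:ℤ) + 1 - ((s:ℤ) + (i:ℤ) - 1) := by
      rw [Int.floor_eq_iff]
      constructor
      · push_cast; nlinarith [hhigh']
      · push_cast; nlinarith [hlow']
    rw [hfloor]; ring
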